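/- Let n and a be integers with n/4 + 2 ≤ a ≤ n/2, and let G = (K_{a−2} ∪ K_{n−a}) ∨ K_2 be the join of the disjoint union of complete graphs K_{a−2} and K_{n−a} with K_2, a graph on n vertices. Then G is 2-connected, σ₂(G) = n, ᾱ(G) = min{2a − 3, n − a + 1}, and σ₂(G) ≤ 2·ᾱ(G) − 2. -/

import Mathlib

namespace SimpleGraph

variable {V : Type*}

/-- `G` has an `(s,t)`-bipartite-hole. -/
def HasBipHole (G : SimpleGraph V) (s t : ℕ) : Prop :=
  ∃ S T : Finset V, Disjoint S T ∧ S.card = s ∧ T.card = t ∧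
    ∀ a ∈ S, ∀ b ∈ T, ¬ G.Adj a b

/-- The bipartite-hole-number `ᾱ(G)`. -/
noncomputable def bipHoleNum (G : SimpleGraph V) : ℕ :=
  sInf {k | 0 < k ∧ ∃ s t : ℕ, 0 < s ∧ 0 < t ∧ s + t = k + 1 ∧ ¬ G.HasBipHole s t}

/-- `σ₂(G)`: the minimum of `d(x) + d(y)` over pairs of distinct nonadjacent vertices. -/
noncomputable def sigmaTwo (G : SimpleGraph V) : ℕ :=
  sInf {m | ∃ x y : V, x ≠ y ∧ ¬ G.Adj x y ∧
    m = (G.neighborSet x).ncard + (G.neighborSet y).ncard}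

/-- The join `G ∨ H` of two graphs: their disjoint union together with all edges between
the two parts. -/
def graphJoin {α β : Type*} (G : SimpleGraph α) (H : SimpleGraph β) :
    SimpleGraph (α ⊕ β) where
  Adj x y :=
    match x, y with
    | Sum.inl a, Sum.inl b => G.Adj a b
    | Sum.inr a, Sum.inr b => H.Adj a b
    | Sum.inl _, Sum.inr _ => True
    | Sum.inr _, Sum.inl _ => True
  symm := ⟨by rintro (a | a) (b | b) h <;> first | exact h.symm | trivial⟩
  loopless := ⟨by rintro (a | a) h <;> [exact G.irrefl h; exact H.irrefl h]⟩

end SimpleGraph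

section Aux

open SimpleGraph

variable {n a : ℕ}

private abbrev Jna (n a : ℕ) :
    SimpleGraph ((Fin (a - 2) ⊕ Fin (n - a)) ⊕ Fin 2) :=
  graphJoin
    ((⊤ : SimpleGraph (Fin (a - 2))).sum (⊤ : SimpleGraph (Fin (n - a))))
    (⊤ : SimpleGraph (Fin 2))

private lemma adj_AA (x y : Fin (a - 2)) :
    (Jna n a).Adj (.inl (.inl x)) (.inl (.inl y)) ↔ x ≠ y := by
  simp [Jna, graphJoin]

private lemma adj_BB (x y : Fin (n - a)) :
    (Jna n a).Adj (.inl (.inr x)) (.inl (.inr y)) ↔ x ≠ y := by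
  simp [Jna, graphJoin]

private lemma adj_AB (x : Fin (a - 2)) (y : Fin (n - a)) :
    ¬ (Jna n a).Adj (.inl (.inl x)) (.inl (.inr y)) := by
  simp [Jna, graphJoin]

private lemma adj_lr (x : Fin (a - 2) ⊕ Fin (n - a)) (c : Fin 2) :
    (Jna n a).Adj (.inl x) (.inr c) := by
  simp [Jna, graphJoin]

private lemma adj_CC (c d : Fin 2) :
    (Jna n a).Adj (.inr c) (.inr d) ↔ c ≠ d := by
  simp [Jna, graphJoin]

private lemma neighborSet_A (x : Fin (a - 2)) :
    (Jna n a).neighborSet (.inl (.inl x)) =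
      (Sum.inl ∘ Sum.inl) '' {x}ᶜ ∪ Sum.inr '' Set.univ := by
  ext w
  rcases w with (y | y) | c <;>
    simp [mem_neighborSet, Jna, graphJoin, ne_comm]

private lemma neighborSet_B (y : Fin (n - a)) :
    (Jna n a).neighborSet (.inl (.inr y)) =
      (Sum.inl ∘ Sum.inr) '' {y}ᶜ ∪ Sum.inr '' Set.univ := by
  ext w
  rcases w with (z | z) | c <;>
    simp [mem_neighborSet, Jna, graphJoin, ne_comm]

private lemma inl_inl_inj :
    Function.Injective (Sum.inl ∘ Sum.inl :
      Fin (a - 2) → (Fin (a - 2) ⊕ Fin (n - a)) ⊕ Fin 2) :=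
  Sum.inl_injective.comp Sum.inl_injective

private lemma inl_inr_inj :
    Function.Injective (Sum.inl ∘ Sum.inr :
      Fin (n - a) → (Fin (a - 2) ⊕ Fin (n - a)) ⊕ Fin 2) :=
  Sum.inl_injective.comp Sum.inr_injective

private lemma ncard_compl_singleton {m : ℕ} (x : Fin m) :
    ({x}ᶜ : Set (Fin m)).ncard = m - 1 := by
  rw [Set.compl_eq_univ_diff, Set.ncard_diff_singleton_of_mem (Set.mem_univ x),
    Set.ncard_univ, Nat.card_eq_fintype_card, Fintype.card_fin]

private lemma ncard_nbhd_A (x : Fin (a - 2)) :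
    ((Jna n a).neighborSet (.inl (.inl x))).ncard = (a - 2 - 1) + 2 := by
  rw [neighborSet_A, Set.ncard_union_eq (by
      rw [Set.disjoint_left]; rintro w ⟨u, -, rfl⟩ ⟨c, -, h⟩; exact absurd h (by simp)),
    Set.ncard_image_of_injective _ inl_inl_inj,
    Set.ncard_image_of_injective _ Sum.inr_injective,
    ncard_compl_singleton, Set.ncard_univ, Nat.card_eq_fintype_card, Fintype.card_fin]

private lemma ncard_nbhd_B (y : Fin (n - a)) :
    ((Jna n a).neighborSet (.inl (.inr y))).ncard = (n - a - 1) + 2 := by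
  rw [neighborSet_B, Set.ncard_union_eq (by
      rw [Set.disjoint_left]; rintro w ⟨u, -, rfl⟩ ⟨c, -, h⟩; exact absurd h (by simp)),
    Set.ncard_image_of_injective _ inl_inr_inj,
    Set.ncard_image_of_injective _ Sum.inr_injective,
    ncard_compl_singleton, Set.ncard_univ, Nat.card_eq_fintype_card, Fintype.card_fin]

private lemma sigma_eq (h4 : 4 ≤ a) (hn : a + 4 ≤ n) : (Jna n a).sigmaTwo = n := by
  have hset : {m | ∃ x y, x ≠ y ∧ ¬ (Jna n a).Adj x y ∧
      m = ((Jna n a).neighborSet x).ncard + ((Jna n a).neighborSet y).ncard} = {n} := by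
    ext m
    simp only [Set.mem_setOf_eq, Set.mem_singleton_iff]
    constructor
    · rintro ⟨x, y, hxy, hnadj, rfl⟩
      rcases x with (p | p) | c <;> rcases y with (q | q) | d
      · exact absurd ((adj_AA p q).mpr (by rintro rfl; exact hxy rfl)) hnadj
      · rw [ncard_nbhd_A, ncard_nbhd_B]; omega
      · exact absurd (adj_lr _ _) hnadj
      · rw [ncard_nbhd_B, ncard_nbhd_A]; omega
      · exact absurd ((adj_BB p q).mpr (by rintro rfl; exact hxy rfl)) hnadj
      · exact absurd (adj_lr _ _) hnadj
      · exact absurd ((adj_lr _ _).symm) hnadj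
      · exact absurd ((adj_lr _ _).symm) hnadj
      · exact absurd ((adj_CC c d).mpr (by rintro rfl; exact hxy rfl)) hnadj
    · rintro rfl
      refine ⟨.inl (.inl ⟨0, by omega⟩), .inl (.inr ⟨0, by omega⟩), by simp, adj_AB _ _, ?_⟩
      rw [ncard_nbhd_A, ncard_nbhd_B]; omega
  rw [sigmaTwo, hset, csInf_singleton]

private lemma hole_symm {W : Type*} {G : SimpleGraph W} {s t : ℕ}
    (h : G.HasBipHole s t) : G.HasBipHole t s := by
  obtain ⟨S, T, hd, hS, hT, hno⟩ := h
  exact ⟨T, S, hd.symm, hT, hS, fun b hb x hx hadj => hno x hx b hb hadj.symm⟩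

private lemma hole_of {s t : ℕ} (hs : s ≤ a - 2) (ht : t ≤ n - a) :
    (Jna n a).HasBipHole s t := by
  obtain ⟨S₀, -, hS₀⟩ := Finset.exists_subset_card_eq
    (s := (Finset.univ : Finset (Fin (a - 2)))) (by simpa using hs)
  obtain ⟨T₀, -, hT₀⟩ := Finset.exists_subset_card_eq
    (s := (Finset.univ : Finset (Fin (n - a)))) (by simpa using ht)
  refine ⟨S₀.image (Sum.inl ∘ Sum.inl), T₀.image (Sum.inl ∘ Sum.inr), ?_, ?_, ?_, ?_⟩
  · rw [Finset.disjoint_left]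
    rintro w hw hw'
    simp only [Finset.mem_image, Function.comp_apply] at hw hw'
    obtain ⟨u, -, rfl⟩ := hw
    obtain ⟨v, -, h⟩ := hw'
    exact absurd h (by simp)
  · rw [Finset.card_image_of_injective _ inl_inl_inj, hS₀]
  · rw [Finset.card_image_of_injective _ inl_inr_inj, hT₀]
  · intro x hx y hy
    simp only [Finset.mem_image, Function.comp_apply] at hx hy
    obtain ⟨u, -, rfl⟩ := hx
    obtain ⟨v, -, rfl⟩ := hy
    exact adj_AB u v

private lemma card_le_of_subset_A {S : Finset ((Fin (a - 2) ⊕ Fin (n - a)) ⊕ Fin 2)}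
    (h : ∀ w ∈ S, ∃ x : Fin (a - 2), w = .inl (.inl x)) : S.card ≤ a - 2 := by
  have hsub : S ⊆ Finset.univ.image (Sum.inl ∘ Sum.inl) := by
    intro w hw
    obtain ⟨x, rfl⟩ := h w hw
    exact Finset.mem_image.mpr ⟨x, Finset.mem_univ x, rfl⟩
  calc S.card ≤ _ := Finset.card_le_card hsub
    _ ≤ (Finset.univ : Finset (Fin (a - 2))).card := Finset.card_image_le
    _ = a - 2 := by simp

private lemma card_le_of_subset_B {S : Finset ((Fin (a - 2) ⊕ Fin (n - a)) ⊕ Fin 2)}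
    (h : ∀ w ∈ S, ∃ x : Fin (n - a), w = .inl (.inr x)) : S.card ≤ n - a := by
  have hsub : S ⊆ Finset.univ.image (Sum.inl ∘ Sum.inr) := by
    intro w hw
    obtain ⟨x, rfl⟩ := h w hw
    exact Finset.mem_image.mpr ⟨x, Finset.mem_univ x, rfl⟩
  calc S.card ≤ _ := Finset.card_le_card hsub
    _ ≤ (Finset.univ : Finset (Fin (n - a))).card := Finset.card_image_le
    _ = n - a := by simp

private lemma hole_bounds {s t : ℕ} (hs : 0 < s) (ht : 0 < t)
    (h : (Jna n a).HasBipHole s t) :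
    (s ≤ a - 2 ∧ t ≤ n - a) ∨ (t ≤ a - 2 ∧ s ≤ n - a) := by
  obtain ⟨S, T, hd, hS, hT, hno⟩ := h
  have hSne : S.Nonempty := Finset.card_pos.mp (hS ▸ hs)
  have hTne : T.Nonempty := Finset.card_pos.mp (hT ▸ ht)
  -- no vertex of the K₂ part can be in S or T
  have hnoC : ∀ c : Fin 2, Sum.inr c ∉ S ∧ Sum.inr c ∉ T := by
    intro c
    constructor
    · intro hc
      obtain ⟨b, hb⟩ := hTne
      have hne : (Sum.inr c : (Fin (a - 2) ⊕ Fin (n - a)) ⊕ Fin 2) ≠ b := by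
        rintro rfl; exact (Finset.disjoint_left.mp hd hc) hb
      refine hno _ hc _ hb ?_
      rcases b with b | d
      · exact (adj_lr _ _).symm
      · exact (adj_CC c d).mpr (by rintro rfl; exact hne rfl)
    · intro hc
      obtain ⟨b, hb⟩ := hSne
      have hne : b ≠ (Sum.inr c : (Fin (a - 2) ⊕ Fin (n - a)) ⊕ Fin 2) := by
        rintro rfl; exact (Finset.disjoint_left.mp hd hb) hc
      refine hno _ hb _ hc ?_
      rcases b with b | d
      · exact adj_lr _ _
      · exact (adj_CC d c).mpr (by rintro rfl; exact hne rfl)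
  have hshape : ∀ w : (Fin (a - 2) ⊕ Fin (n - a)) ⊕ Fin 2, w ∈ S ∨ w ∈ T →
      (∃ x, w = Sum.inl (Sum.inl x)) ∨ ∃ y, w = Sum.inl (Sum.inr y) := by
    rintro ((x | y) | c) hw
    · exact Or.inl ⟨x, rfl⟩
    · exact Or.inr ⟨y, rfl⟩
    · rcases hw with hw | hw
      · exact absurd hw (hnoC c).1
      · exact absurd hw (hnoC c).2
  by_cases hSA : ∃ x : Fin (a - 2), Sum.inl (Sum.inl x) ∈ S
  · -- S meets the A part, so T is inside B, and then S is inside A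
    obtain ⟨x, hx⟩ := hSA
    have hTB : ∀ w ∈ T, ∃ y : Fin (n - a), w = Sum.inl (Sum.inr y) := by
      intro w hw
      rcases hshape w (Or.inr hw) with ⟨y, rfl⟩ | hy
      · exfalso
        have hne : x ≠ y := by
          rintro rfl; exact (Finset.disjoint_left.mp hd hx) hw
        exact hno _ hx _ hw ((adj_AA x y).mpr hne)
      · exact hy
    have hSA' : ∀ w ∈ S, ∃ x : Fin (a - 2), w = Sum.inl (Sum.inl x) := by
      intro w hw
      rcases hshape w (Or.inl hw) with hx' | ⟨y, rfl⟩
      · exact hx'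
      · exfalso
        obtain ⟨b, hb⟩ := hTne
        obtain ⟨z, rfl⟩ := hTB b hb
        have hne : y ≠ z := by
          rintro rfl; exact (Finset.disjoint_left.mp hd hw) hb
        exact hno _ hw _ hb ((adj_BB y z).mpr hne)
    exact Or.inl ⟨hS ▸ card_le_of_subset_A hSA', hT ▸ card_le_of_subset_B hTB⟩
  · -- S is inside B; then T is inside A
    push_neg at hSA
    have hSB : ∀ w ∈ S, ∃ y : Fin (n - a), w = Sum.inl (Sum.inr y) := by
      intro w hw
      rcases hshape w (Or.inl hw) with ⟨x, rfl⟩ | hy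
      · exact absurd hw (hSA x)
      · exact hy
    have hTA : ∀ w ∈ T, ∃ x : Fin (a - 2), w = Sum.inl (Sum.inl x) := by
      intro w hw
      rcases hshape w (Or.inr hw) with hx | ⟨y, rfl⟩
      · exact hx
      · exfalso
        obtain ⟨b, hb⟩ := hSne
        obtain ⟨z, rfl⟩ := hSB b hb
        have hne : z ≠ y := by
          rintro rfl; exact (Finset.disjoint_left.mp hd hb) hw
        exact hno _ hb _ hw ((adj_BB z y).mpr hne)
    exact Or.inr ⟨hT ▸ card_le_of_subset_A hTA, hS ▸ card_le_of_subset_B hSB⟩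

private lemma bhn_eq (h4 : 4 ≤ a) (h2a : 2 * a ≤ n) :
    (Jna n a).bipHoleNum = min (2 * a - 3) (n - a + 1) := by
  set m₀ := min (2 * a - 3) (n - a + 1) with hm₀
  have hmem : m₀ ∈ {k | 0 < k ∧ ∃ s t : ℕ, 0 < s ∧ 0 < t ∧ s + t = k + 1 ∧
      ¬ (Jna n a).HasBipHole s t} := by
    refine ⟨by omega, ?_⟩
    by_cases hc : 2 * a - 3 ≤ n - a + 1
    · refine ⟨a - 1, a - 1, by omega, by omega, by omega, fun h => ?_⟩
      rcases hole_bounds (by omega) (by omega) h with ⟨h1, -⟩ | ⟨h1, -⟩ <;> omega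
    · refine ⟨n - a + 1, 1, by omega, by omega, by omega, fun h => ?_⟩
      rcases hole_bounds (by omega) (by omega) h with ⟨h1, h2⟩ | ⟨h1, h2⟩ <;> omega
  refine le_antisymm (Nat.sInf_le hmem) (le_csInf ⟨m₀, hmem⟩ ?_)
  rintro k ⟨hk0, s, t, hs, ht, hsum, hnohole⟩
  by_contra hlt
  push_neg at hlt
  apply hnohole
  rcases le_total s t with hst | hst
  · exact hole_of (by omega) (by omega)
  · exact hole_symm (hole_of (by omega) (by omega))

private lemma conn_aux (h4 : 4 ≤ a) (v : (Fin (a - 2) ⊕ Fin (n - a)) ⊕ Fin 2) :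
    ((Jna n a).induce ({v}ᶜ : Set ((Fin (a - 2) ⊕ Fin (n - a)) ⊕ Fin 2))).Connected := by
  obtain ⟨c, hc⟩ : ∃ c : Fin 2, (Sum.inr c : (Fin (a - 2) ⊕ Fin (n - a)) ⊕ Fin 2) ≠ v := by
    by_cases h : v = Sum.inr 0
    · exact ⟨1, by simp [h]⟩
    · exact ⟨0, fun he => h he.symm⟩
  have hcmem : (Sum.inr c : (Fin (a - 2) ⊕ Fin (n - a)) ⊕ Fin 2) ∈
      ({v}ᶜ : Set ((Fin (a - 2) ⊕ Fin (n - a)) ⊕ Fin 2)) := hc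
  set c' : ({v}ᶜ : Set ((Fin (a - 2) ⊕ Fin (n - a)) ⊕ Fin 2)) := ⟨Sum.inr c, hcmem⟩
  have hreach : ∀ x, ((Jna n a).induce ({v}ᶜ : Set _)).Reachable x c' := by
    intro x
    by_cases hx : (x : (Fin (a - 2) ⊕ Fin (n - a)) ⊕ Fin 2) = Sum.inr c
    · exact (Subtype.ext hx : x = c') ▸ Reachable.refl x
    · refine Adj.reachable ?_
      show (Jna n a).Adj (x : (Fin (a - 2) ⊕ Fin (n - a)) ⊕ Fin 2) (Sum.inr c)
      obtain ⟨(w | w) | d, hxm⟩ := x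
      · exact adj_lr _ _
      · exact adj_lr _ _
      · exact (adj_CC d c).mpr (by rintro rfl; exact hx rfl)
  rw [connected_iff]
  exact ⟨fun x y => (hreach x).trans (hreach y).symm, ⟨c'⟩⟩

end Aux

open SimpleGraph in
/-- For `n/4 + 2 ≤ a ≤ n/2`, the graph `G = (K_{a-2} ∪ K_{n-a}) ∨ K_2`
on `n` vertices is 2-connected, has `σ₂(G) = n`, `ᾱ(G) = min (2a - 3) (n - a + 1)`, and
`σ₂(G) ≤ 2ᾱ(G) - 2`. -/
theorem stmt18 (n a : ℕ) (ha : n + 8 ≤ 4 * a) (ha' : 2 * a ≤ n)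
    (G : SimpleGraph ((Fin (a - 2) ⊕ Fin (n - a)) ⊕ Fin 2))
    (hG : G = graphJoin
      ((⊤ : SimpleGraph (Fin (a - 2))).sum (⊤ : SimpleGraph (Fin (n - a))))
      (⊤ : SimpleGraph (Fin 2))) :
    (3 ≤ Fintype.card ((Fin (a - 2) ⊕ Fin (n - a)) ⊕ Fin 2) ∧
      ∀ v, (G.induce ({v}ᶜ : Set ((Fin (a - 2) ⊕ Fin (n - a)) ⊕ Fin 2))).Connected) ∧
    G.sigmaTwo = n ∧
    G.bipHoleNum = min (2 * a - 3) (n - a + 1) ∧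
    G.sigmaTwo ≤ 2 * G.bipHoleNum - 2 := by
  have h4 : 4 ≤ a := by omega
  subst hG
  have hsig : (Jna n a).sigmaTwo = n := sigma_eq h4 (by omega)
  have hbhn : (Jna n a).bipHoleNum = min (2 * a - 3) (n - a + 1) := bhn_eq h4 ha'
  refine ⟨⟨by simp; omega, fun v => conn_aux h4 v⟩, hsig, hbhn, ?_⟩
  rw [hsig, hbhn]
  omega
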